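/- Green's function first-moment identity: for k ∈ ℕ₀, ξ ≠ 0 and 0 < ρ < 1, with G_k(r,ρ) = −I_k(|ξ|min(r,ρ)) (K_k(|ξ|max(r,ρ)) − (K_k(|ξ|)/I_k(|ξ|)) I_k(|ξ|max(r,ρ))), one has ρ^{−k} ∫₀¹ |G_k(r,ρ)| r^{1+k} dr = (1/|ξ|²)(1 − ρ^{−k} I_k(|ξ|ρ)/I_k(|ξ|)), and in particular |ξ|² ρ^{−k} ∫₀¹ |G_k(r,ρ)| r^{1+k} dr ≤ 1. -/

import Mathlib

open Set MeasureTheory Filter intervalIntegral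

/-- The (real-valued) Bessel operator `D_κ f (r) = f'(r) + (κ/r) f(r)`. -/
noncomputable def besselDR (κ : ℝ) (f : ℝ → ℝ) : ℝ → ℝ :=
  fun r => deriv f r + (κ / r) * f r

/-- The Green's function `G_k(r,ρ)` for `D_{1−k}D_k − ξ²` on `(0,1)` with Dirichlet
condition at `r = 1`, built from modified Bessel functions `I`, `K`. -/
noncomputable def greenFun (I K : ℤ → ℝ → ℝ) (k : ℤ) (ξ ρ r : ℝ) : ℝ :=
  -(I k (|ξ| * min r ρ)) *
    (K k (|ξ| * max r ρ) - K k |ξ| / I k |ξ| * I k (|ξ| * max r ρ))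

lemma hasDerivAt_of_besselDR {f g : ℝ → ℝ} {κ : ℝ}
    (hdiff : DifferentiableOn ℝ f (Set.Ioi 0))
    (hrec : ∀ s > (0 : ℝ), besselDR κ f s = g s) {x : ℝ} (hx : 0 < x) :
    HasDerivAt f (g x - (κ / x) * f x) x := by
  have hd : DifferentiableAt ℝ f x := hdiff.differentiableAt (Ioi_mem_nhds hx)
  have h1 := hrec x hx
  simp only [besselDR] at h1
  have h2 : deriv f x = g x - (κ / x) * f x := by linarith
  exact h2 ▸ hd.hasDerivAt

theorem green_first_moment (I K : ℤ → ℝ → ℝ)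
    (hIdiff : ∀ m : ℤ, DifferentiableOn ℝ (I m) (Set.Ioi 0))
    (hKdiff : ∀ m : ℤ, DifferentiableOn ℝ (K m) (Set.Ioi 0))
    (hIrec : ∀ m : ℤ, ∀ s > (0 : ℝ), besselDR (m : ℝ) (I m) s = I (m - 1) s)
    (hIrec' : ∀ m : ℤ, ∀ s > (0 : ℝ), besselDR (-(m : ℝ)) (I m) s = I (m + 1) s)
    (hKrec : ∀ m : ℤ, ∀ s > (0 : ℝ), besselDR (m : ℝ) (K m) s = -K (m - 1) s)
    (hKrec' : ∀ m : ℤ, ∀ s > (0 : ℝ), besselDR (-(m : ℝ)) (K m) s = -K (m + 1) s)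
    (hWron : ∀ m : ℤ, ∀ s > (0 : ℝ), s * (K m s * I (m - 1) s + I m s * K (m - 1) s) = 1)
    (hIpos : ∀ m : ℤ, ∀ s > (0 : ℝ), 0 < I m s)
    (hKpos : ∀ m : ℤ, ∀ s > (0 : ℝ), 0 < K m s)
    (k : ℕ) (ξ : ℝ) (hξ : ξ ≠ 0) (ρ : ℝ) (hρ0 : 0 < ρ) (hρ1 : ρ < 1) :
    ρ ^ (-(k : ℤ)) * ∫ r in (0 : ℝ)..1, |greenFun I K k ξ ρ r| * r ^ (1 + k)
        = (1 / ξ ^ 2) * (1 - ρ ^ (-(k : ℤ)) * I k (|ξ| * ρ) / I k |ξ|)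
      ∧ ξ ^ 2 * (ρ ^ (-(k : ℤ)) * ∫ r in (0 : ℝ)..1, |greenFun I K k ξ ρ r| * r ^ (1 + k))
          ≤ 1 := by
  set kk : ℤ := (k : ℤ) with hkk
  set s : ℝ := |ξ| with hs_def
  have hs : 0 < s := abs_pos.mpr hξ
  set c : ℝ := K kk |ξ| / I kk |ξ| with hc_def
  have hIs : 0 < I kk s := hIpos kk s hs
  have hc : 0 < c := div_pos (hKpos kk s hs) hIs
  -- derivative facts
  have hI1 : ∀ m : ℤ, ∀ x : ℝ, 0 < x →
      HasDerivAt (I m) (I (m - 1) x - ((m : ℝ) / x) * I m x) x :=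
    fun m x hx => hasDerivAt_of_besselDR (hIdiff m) (hIrec m) hx
  have hI2 : ∀ m : ℤ, ∀ x : ℝ, 0 < x →
      HasDerivAt (I m) (I (m + 1) x + ((m : ℝ) / x) * I m x) x := by
    intro m x hx
    have := hasDerivAt_of_besselDR (hIdiff m) (hIrec' m) hx
    have he : I (m + 1) x - (-(m : ℝ) / x) * I m x = I (m + 1) x + ((m : ℝ) / x) * I m x := by
      ring
    exact he ▸ this
  have hK1 : ∀ m : ℤ, ∀ x : ℝ, 0 < x →
      HasDerivAt (K m) (-K (m - 1) x - ((m : ℝ) / x) * K m x) x := by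
    intro m x hx
    have := hasDerivAt_of_besselDR (hKdiff m) (hKrec m) hx
    have he : (fun y => -K (m-1) y) x - ((m : ℝ) / x) * K m x
        = -K (m - 1) x - ((m : ℝ) / x) * K m x := by ring_nf
    exact he ▸ this
  -- monotonicity of I
  have hIderiv_pos : ∀ m : ℤ, ∀ x : ℝ, 0 < x →
      0 < I (m - 1) x - ((m : ℝ) / x) * I m x := by
    intro m x hx
    have hu := (hI1 m x hx).unique (hI2 m x hx)
    have h1 := hIpos (m - 1) x hx
    have h2 := hIpos (m + 1) x hx
    linarith
  have hImono : ∀ m : ℤ, StrictMonoOn (I m) (Set.Ioi 0) := by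
    intro m
    apply strictMonoOn_of_deriv_pos (convex_Ioi 0) ((hIdiff m).continuousOn)
    intro x hx
    rw [interior_Ioi] at hx
    rw [(hI1 m x hx).deriv]
    exact hIderiv_pos m x hx
  -- the function Kt and its properties
  set Kt : ℝ → ℝ := fun x => K kk x - c * I kk x with hKt_def
  have hKt_deriv : ∀ x : ℝ, 0 < x → HasDerivAt Kt
      ((-K (kk - 1) x - ((kk : ℝ) / x) * K kk x) - c * (I (kk - 1) x - ((kk : ℝ) / x) * I kk x)) x :=
    fun x hx => (hK1 kk x hx).sub ((hI1 kk x hx).const_mul c)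
  have hKt_anti : StrictAntiOn Kt (Set.Ioi 0) := by
    apply strictAntiOn_of_deriv_neg (convex_Ioi 0)
    · exact ((hKdiff kk).continuousOn).sub (((hIdiff kk).continuousOn).const_smul c)
    · intro x hx
      rw [interior_Ioi] at hx
      rw [(hKt_deriv x hx).deriv]
      have h1 := hKpos (kk - 1) x hx
      have h2 := hKpos kk x hx
      have h3 := hIderiv_pos kk x hx
      have h4 : 0 ≤ ((kk : ℝ) / x) * K kk x := by
        apply mul_nonneg (div_nonneg _ hx.le) h2.le
        simp only [hkk]
        push_cast
        positivity
      nlinarith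
  have hKt_s : Kt s = 0 := by
    simp only [hKt_def, hc_def]
    rw [← hs_def, div_mul_cancel₀ _ hIs.ne', sub_self]
  have hKt_pos : ∀ x : ℝ, 0 < x → x < s → 0 < Kt x := by
    intro x hx hxs
    have := hKt_anti hx (mem_Ioi.mpr hs) hxs
    rwa [hKt_s] at this
  have hKt_nonneg : ∀ x : ℝ, 0 < x → x ≤ s → 0 ≤ Kt x := by
    intro x hx hxs
    rcases eq_or_lt_of_le hxs with h | h
    · rw [h, hKt_s]
    · exact (hKt_pos x hx h).le
  have hKtρ : 0 < Kt (s * ρ) := hKt_pos _ (by positivity) (by nlinarith)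
  -- continuity helpers
  have hIcont : ∀ m : ℤ, ContinuousOn (fun r : ℝ => I m (s * r)) (Set.Ioi 0) := by
    intro m
    apply ((hIdiff m).continuousOn).comp ((continuous_const.mul continuous_id).continuousOn)
    intro x hx
    exact mem_Ioi.mpr (mul_pos hs (mem_Ioi.mp hx))
  have hKtcont : ContinuousOn (fun r : ℝ => Kt (s * r)) (Set.Ioi 0) := by
    apply (((hKdiff kk).continuousOn).sub (((hIdiff kk).continuousOn).const_smul c)).comp
      ((continuous_const.mul continuous_id).continuousOn)
    intro x hx
    exact mem_Ioi.mpr (mul_pos hs (mem_Ioi.mp hx))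
  -- integrability of the first piece
  have hintA : IntervalIntegrable (fun r : ℝ => I kk (s * r) * r ^ (1 + k)) volume 0 ρ := by
    rw [intervalIntegrable_iff_integrableOn_Ioc_of_le hρ0.le]
    refine ⟨(hIcont kk |>.mono (Ioc_subset_Ioi_self)).mul
        (continuous_pow (1 + k)).continuousOn |>.aestronglyMeasurable measurableSet_Ioc, ?_⟩
    apply HasFiniteIntegral.restrict_of_bounded (C := I kk (s * ρ) * ρ ^ (1 + k))
      measure_Ioc_lt_top
    apply (ae_restrict_iff' measurableSet_Ioc).mpr
    apply ae_of_all
    intro x hx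
    have hx0 : 0 < x := hx.1
    have hIle : I kk (s * x) ≤ I kk (s * ρ) := by
      rcases eq_or_lt_of_le hx.2 with h | h
      · rw [h]
      · exact ((hImono kk) (mem_Ioi.mpr (by positivity)) (mem_Ioi.mpr (by positivity))
          (by nlinarith)).le
    have h1 : 0 < I kk (s * x) := hIpos kk _ (by positivity)
    rw [Real.norm_eq_abs, abs_of_nonneg (by positivity)]
    have h2 : x ^ (1 + k) ≤ ρ ^ (1 + k) := pow_le_pow_left₀ hx0.le hx.2 _
    nlinarith [pow_pos hx0 (1 + k)]
  -- FTC for the first piece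
  have hItA : ∫ r in (0:ℝ)..ρ, I kk (s * r) * r ^ (1 + k)
      = ρ ^ (1 + k) * I (kk + 1) (s * ρ) / s := by
    have hderiv : ∀ x ∈ Ioo (0:ℝ) ρ, HasDerivAt
        (fun r : ℝ => r ^ (1 + k) * I (kk + 1) (s * r) / s) (I kk (s * x) * x ^ (1 + k)) x := by
      intro x hx
      have hx0 : 0 < x := hx.1
      have hsx : 0 < s * x := by positivity
      have hinner : HasDerivAt (fun r : ℝ => I (kk + 1) (s * r))
          ((I (kk + 1 - 1) (s * x) - (((kk : ℝ) + 1) / (s * x)) * I (kk + 1) (s * x)) * s) x := by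
        have h1 := hI1 (kk + 1) (s * x) hsx
        have h2 : HasDerivAt (fun r : ℝ => s * r) s x := by
          simpa using (hasDerivAt_id x).const_mul s
        have := h1.comp x h2
        push_cast at this ⊢
        exact this
      have hpow : HasDerivAt (fun r : ℝ => r ^ (1 + k)) (((1 + k : ℕ) : ℝ) * x ^ k) x := by
        simpa using hasDerivAt_pow (1 + k) x
      have := (hpow.mul hinner).div_const s
      refine HasDerivAt.congr_deriv this ?_
      have hkk1 : kk + 1 - 1 = kk := by ring
      rw [hkk1]
      field_simp
      simp only [hkk]
      push_cast
      ring
    have ha : Tendsto (fun r : ℝ => r ^ (1 + k) * I (kk + 1) (s * r) / s) (nhdsWithin 0 (Ioi 0))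
        (nhds 0) := by
      apply squeeze_zero' (f := fun r : ℝ => r ^ (1 + k) * I (kk + 1) (s * r) / s)
        (g := fun r : ℝ => r ^ (1 + k) * I (kk + 1) s / s)
      · filter_upwards [self_mem_nhdsWithin] with x hx
        have hx0 : 0 < x := hx
        have hIp := hIpos (kk + 1) (s * x) (by positivity)
        positivity
      · filter_upwards [Ioo_mem_nhdsGT_of_mem (by constructor <;> norm_num : (0:ℝ) ∈ Ico 0 1)]
          with x hx
        have hx0 : 0 < x := hx.1
        have hIle : I (kk + 1) (s * x) ≤ I (kk + 1) s :=
          ((hImono (kk + 1)) (mem_Ioi.mpr (by positivity)) (mem_Ioi.mpr hs)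
            (mul_lt_of_lt_one_right hs hx.2)).le
        have hIp := hIpos (kk + 1) (s * x) (by positivity)
        gcongr
      · have hten : Tendsto (fun r : ℝ => r ^ (1 + k) * I (kk + 1) s / s) (nhds 0)
            (nhds ((0:ℝ) ^ (1 + k) * I (kk + 1) s / s)) := (Continuous.tendsto (by fun_prop) 0)
        have hten' : Tendsto (fun r : ℝ => r ^ (1 + k) * I (kk + 1) s / s) (nhds 0) (nhds 0) := by
          simpa using hten
        exact hten'.mono_left nhdsWithin_le_nhds
    have hb : Tendsto (fun r : ℝ => r ^ (1 + k) * I (kk + 1) (s * r) / s) (nhdsWithin ρ (Iio ρ))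
        (nhds (ρ ^ (1 + k) * I (kk + 1) (s * ρ) / s)) := by
      have hd : DifferentiableAt ℝ (fun r : ℝ => I (kk + 1) (s * r)) ρ := by
        have h2 : HasDerivAt (fun r : ℝ => s * r) s ρ := by
          simpa using (hasDerivAt_id ρ).const_mul s
        exact ((hI1 (kk + 1) (s * ρ) (by positivity)).comp ρ h2).differentiableAt
      exact (((differentiable_pow (1 + k)).differentiableAt.mul hd).div_const
        s).continuousAt.continuousWithinAt.tendsto
    have := integral_eq_sub_of_hasDerivAt_of_tendsto hρ0 hderiv hintA ha hb
    rw [this]; ring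
  -- second antiderivative
  set Kt2 : ℝ → ℝ := fun x => K (kk + 1) x + c * I (kk + 1) x with hKt2_def
  have hKt2_deriv : ∀ x : ℝ, 0 < x → HasDerivAt Kt2
      ((-K kk x - (((kk : ℝ) + 1) / x) * K (kk + 1) x)
        + c * (I kk x - (((kk : ℝ) + 1) / x) * I (kk + 1) x)) x := by
    intro x hx
    have h1 := hK1 (kk + 1) x hx
    have h2 := hI1 (kk + 1) x hx
    have h3 := h1.add (h2.const_mul c)
    have hkk1 : kk + 1 - 1 = kk := by ring
    rw [hkk1] at h3
    push_cast at h3 ⊢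
    exact h3
  have hintB : IntervalIntegrable (fun r : ℝ => Kt (s * r) * r ^ (1 + k)) volume ρ 1 := by
    apply ContinuousOn.intervalIntegrable
    apply ContinuousOn.mul _ (continuous_pow (1 + k)).continuousOn
    apply hKtcont.mono
    intro x hx
    rw [uIcc_of_le hρ1.le] at hx
    exact mem_Ioi.mpr (lt_of_lt_of_le hρ0 hx.1)
  have hItB : ∫ r in ρ..1, Kt (s * r) * r ^ (1 + k)
      = (ρ ^ (1 + k) * Kt2 (s * ρ) - Kt2 s) / s := by
    have hderiv : ∀ x ∈ uIcc ρ 1, HasDerivAt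
        (fun r : ℝ => -(r ^ (1 + k) * Kt2 (s * r)) / s) (Kt (s * x) * x ^ (1 + k)) x := by
      intro x hx
      rw [uIcc_of_le hρ1.le] at hx
      have hx0 : 0 < x := lt_of_lt_of_le hρ0 hx.1
      have hsx : 0 < s * x := by positivity
      have h2 : HasDerivAt (fun r : ℝ => s * r) s x := by
        simpa using (hasDerivAt_id x).const_mul s
      have hinner := (hKt2_deriv (s * x) hsx).comp x h2
      have hpow : HasDerivAt (fun r : ℝ => r ^ (1 + k)) (((1 + k : ℕ) : ℝ) * x ^ k) x := by
        simpa using hasDerivAt_pow (1 + k) x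
      have h4 := ((hpow.mul hinner).neg).div_const s
      refine HasDerivAt.congr_deriv h4 ?_
      simp only [hKt_def, hKt2_def, Function.comp_apply]
      field_simp
      simp only [hkk]
      push_cast
      ring
    have h5 := integral_eq_sub_of_hasDerivAt hderiv hintB
    rw [h5]
    simp only [one_pow, mul_one]
    ring
  -- pointwise identification of |greenFun| on the two regions
  have heqA : ∀ x ∈ Ioc (0:ℝ) ρ, |greenFun I K kk ξ ρ x| * x ^ (1 + k)
      = Kt (s * ρ) * (I kk (s * x) * x ^ (1 + k)) := by
    intro x hx
    have hx0 : 0 < x := hx.1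
    have hmin : min x ρ = x := min_eq_left hx.2
    have hmax : max x ρ = ρ := max_eq_right hx.2
    have hgf : greenFun I K kk ξ ρ x = -(I kk (s * x)) * Kt (s * ρ) := by
      simp only [greenFun, hmin, hmax, ← hs_def, ← hc_def, hKt_def]
      rfl
    rw [hgf, abs_mul, abs_neg, abs_of_pos (hIpos kk _ (by positivity)), abs_of_pos hKtρ]
    ring
  have heqB : ∀ x ∈ Ioc ρ (1:ℝ), |greenFun I K kk ξ ρ x| * x ^ (1 + k)
      = I kk (s * ρ) * (Kt (s * x) * x ^ (1 + k)) := by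
    intro x hx
    have hx0 : 0 < x := lt_trans hρ0 hx.1
    have hmin : min x ρ = ρ := min_eq_right hx.1.le
    have hmax : max x ρ = x := max_eq_left hx.1.le
    have hgf : greenFun I K kk ξ ρ x = -(I kk (s * ρ)) * Kt (s * x) := by
      simp only [greenFun, hmin, hmax, ← hs_def, ← hc_def, hKt_def]
      rfl
    have hKtx : 0 ≤ Kt (s * x) :=
      hKt_nonneg _ (by positivity) (mul_le_of_le_one_right hs.le hx.2)
    rw [hgf, abs_mul, abs_neg, abs_of_pos (hIpos kk _ (by positivity)), abs_of_nonneg hKtx]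
    ring
  -- integrability of |greenFun| * r^(1+k) on the two pieces
  have hfA : IntervalIntegrable (fun r : ℝ => |greenFun I K kk ξ ρ r| * r ^ (1 + k)) volume 0 ρ := by
    rw [intervalIntegrable_iff_integrableOn_Ioc_of_le hρ0.le]
    have h1 : IntegrableOn (fun r : ℝ => Kt (s * ρ) * (I kk (s * r) * r ^ (1 + k)))
        (Ioc 0 ρ) volume := by
      rw [← intervalIntegrable_iff_integrableOn_Ioc_of_le hρ0.le]
      exact hintA.const_mul _
    exact h1.congr_fun (fun x hx => (heqA x hx).symm) measurableSet_Ioc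
  have hfB : IntervalIntegrable (fun r : ℝ => |greenFun I K kk ξ ρ r| * r ^ (1 + k)) volume ρ 1 := by
    rw [intervalIntegrable_iff_integrableOn_Ioc_of_le hρ1.le]
    have h1 : IntegrableOn (fun r : ℝ => I kk (s * ρ) * (Kt (s * r) * r ^ (1 + k)))
        (Ioc ρ 1) volume := by
      rw [← intervalIntegrable_iff_integrableOn_Ioc_of_le hρ1.le]
      exact hintB.const_mul _
    exact h1.congr_fun (fun x hx => (heqB x hx).symm) measurableSet_Ioc
  -- split and evaluate the integral
  have hval : (∫ r in (0:ℝ)..1, |greenFun I K kk ξ ρ r| * r ^ (1 + k))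
      = Kt (s * ρ) * (ρ ^ (1 + k) * I (kk + 1) (s * ρ) / s)
        + I kk (s * ρ) * ((ρ ^ (1 + k) * Kt2 (s * ρ) - Kt2 s) / s) := by
    rw [← integral_add_adjacent_intervals hfA hfB]
    have e1 : (∫ r in (0:ℝ)..ρ, |greenFun I K kk ξ ρ r| * r ^ (1 + k))
        = Kt (s * ρ) * (ρ ^ (1 + k) * I (kk + 1) (s * ρ) / s) := by
      rw [integral_congr_ae (ae_of_all _ (fun x hx => heqA x ((uIoc_of_le hρ0.le) ▸ hx))),
        intervalIntegral.integral_const_mul, hItA]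
    have e2 : (∫ r in ρ..(1:ℝ), |greenFun I K kk ξ ρ r| * r ^ (1 + k))
        = I kk (s * ρ) * ((ρ ^ (1 + k) * Kt2 (s * ρ) - Kt2 s) / s) := by
      rw [integral_congr_ae (ae_of_all _ (fun x hx => heqB x ((uIoc_of_le hρ1.le) ▸ hx))),
        intervalIntegral.integral_const_mul, hItB]
    rw [e1, e2]
  -- Wronskian consequences
  have hsρ : 0 < s * ρ := by positivity
  have W1 := hWron (kk + 1) (s * ρ) hsρ
  have W2 := hWron (kk + 1) s hs
  have hkk1 : kk + 1 - 1 = kk := by ring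
  rw [hkk1] at W1 W2
  have E1 : Kt (s * ρ) * I (kk + 1) (s * ρ) + I kk (s * ρ) * Kt2 (s * ρ) = 1 / (s * ρ) := by
    simp only [hKt_def, hKt2_def]
    field_simp
    linear_combination W1
  have E2 : Kt2 s = 1 / (s * I kk s) := by
    simp only [hKt2_def, hc_def, ← hs_def]
    rw [eq_div_iff (mul_ne_zero hs.ne' hIs.ne')]
    linear_combination W2 + (K kk s * I (kk + 1) s * s) * mul_inv_cancel₀ hIs.ne'
  -- final value of the integral
  have hT : (∫ r in (0:ℝ)..1, |greenFun I K kk ξ ρ r| * r ^ (1 + k))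
      = ρ ^ k / s ^ 2 - I kk (s * ρ) / (s ^ 2 * I kk s) := by
    rw [hval]
    have e : Kt (s * ρ) * (ρ ^ (1 + k) * I (kk + 1) (s * ρ) / s)
        + I kk (s * ρ) * ((ρ ^ (1 + k) * Kt2 (s * ρ) - Kt2 s) / s)
        = (ρ ^ (1 + k) * (Kt (s * ρ) * I (kk + 1) (s * ρ) + I kk (s * ρ) * Kt2 (s * ρ))
            - I kk (s * ρ) * Kt2 s) / s := by ring
    rw [e, E1, E2]
    have hIs' : I kk s ≠ 0 := ne_of_gt hIs
    field_simp
    ring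
  -- conclusion
  have hzp : ρ ^ (-(k : ℤ)) = (ρ ^ k : ℝ)⁻¹ := by
    rw [zpow_neg, zpow_natCast]
  have hξ2 : ξ ^ 2 = s ^ 2 := (sq_abs ξ).symm
  have hρk : (0:ℝ) < ρ ^ k := pow_pos hρ0 k
  have hfirst : ρ ^ (-(k : ℤ)) * ∫ r in (0:ℝ)..1, |greenFun I K kk ξ ρ r| * r ^ (1 + k)
      = (1 / ξ ^ 2) * (1 - ρ ^ (-(k : ℤ)) * I kk (s * ρ) / I kk s) := by
    rw [hT, hzp, hξ2]
    have hIs' : I kk s ≠ 0 := ne_of_gt hIs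
    field_simp
  refine ⟨hfirst, ?_⟩
  rw [hfirst, ← mul_assoc]
  have hξ2' : ξ ^ 2 ≠ 0 := pow_ne_zero 2 hξ
  rw [mul_one_div, div_self hξ2', one_mul]
  have hpos : 0 < ρ ^ (-(k : ℤ)) * I kk (s * ρ) / I kk s := by
    rw [hzp]
    have := hIpos kk (s * ρ) hsρ
    positivity
  linarith
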